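/- Let Ω := Bool × Bool × Bool carry the product ℙ of three fair coin measures (each coordinate equal to true with probability 1/2, independently). Define real-valued random variables A(ω) := indicator that ω.1 = true, Ã(ω) := indicator that ω.2.1 = true, and B(ω) := indicator that ω.2.2 = true, and let 𝒢 be the σ-algebra generated by the first coordinate (the comap of the Borel σ-algebra on Bool under ω ↦ ω.1). Then: (i) A and B have the same distribution (the pushforward measures of ℙ under A and under B coincide); (ii) the conditional expectation E[A − Ã | 𝒢] equals A − 1/2 almost everywhere; (iii) ℙ{ω : A(ω) − 1/2 = 0} = 0; and (iv) E[B − B | 𝒢] = 0 everywhere. -/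

import Mathlib

open MeasureTheory ProbabilityTheory

/-- The fair coin measure on `Bool`. -/
noncomputable def coin : Measure Bool := (PMF.uniformOfFintype Bool).toMeasure

/-- The product of three independent fair coin measures. -/
noncomputable def P3 : Measure (Bool × Bool × Bool) := coin.prod (coin.prod coin)

/-- Agent 1's proposal, as the indicator of the first coordinate. -/
noncomputable def A (ω : Bool × Bool × Bool) : ℝ := if ω.1 = true then 1 else 0

/-- The independent replacement draw, as the indicator of the second coordinate. -/
noncomputable def Atil (ω : Bool × Bool × Bool) : ℝ := if ω.2.1 = true then 1 else 0

/-- The second mechanism's reward, as the indicator of the third coordinate. -/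
noncomputable def B (ω : Bool × Bool × Bool) : ℝ := if ω.2.2 = true then 1 else 0

/-- The σ-algebra generated by agent 1's action (the first coordinate). -/
def 𝒢 : MeasurableSpace (Bool × Bool × Bool) :=
  MeasurableSpace.comap (fun ω => ω.1) inferInstance

instance : IsProbabilityMeasure coin := PMF.toMeasure.isProbabilityMeasure _

instance : IsProbabilityMeasure P3 := by unfold P3; infer_instance

lemma h𝒢le : 𝒢 ≤ (inferInstance : MeasurableSpace (Bool × Bool × Bool)) :=
  measurable_fst.comap_le

lemma hf_meas : Measurable (fun b : Bool => if b = true then (1 : ℝ) else 0) :=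
  measurable_of_countable _

lemma hA_meas : Measurable A := hf_meas.comp measurable_fst

lemma hAtil_meas : Measurable Atil := hf_meas.comp (measurable_fst.comp measurable_snd)

lemma coin_singleton (b : Bool) : coin {b} = 2⁻¹ := by
  rw [coin, PMF.toMeasure_apply_singleton _ _ (measurableSet_singleton b)]
  simp [PMF.uniformOfFintype_apply]

lemma map_fst_P3 : Measure.map Prod.fst P3 = coin := by
  rw [P3, Measure.map_fst_prod, measure_univ, one_smul]

lemma map_snd_P3 : Measure.map Prod.snd P3 = coin.prod coin := by
  rw [P3, Measure.map_snd_prod, measure_univ, one_smul]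

lemma indep_fst_snd : IndepFun Prod.fst Prod.snd P3 := by
  rw [indepFun_iff_map_prod_eq_prod_map_map measurable_fst.aemeasurable
    measurable_snd.aemeasurable]
  have h : (fun ω : Bool × Bool × Bool => (ω.1, ω.2)) = id := rfl
  rw [h, Measure.map_id, map_fst_P3, map_snd_P3, P3]

lemma indep_Atil_fst : IndepFun Atil (fun ω : Bool × Bool × Bool => ω.1) P3 := by
  have h := indep_fst_snd.symm.comp
    (φ := fun p : Bool × Bool => if p.1 = true then (1 : ℝ) else 0) (ψ := id)
    (measurable_of_countable _) measurable_id
  exact h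

lemma integral_Atil : ∫ ω, Atil ω ∂P3 = 1 / 2 := by
  have hS : MeasurableSet {ω : Bool × Bool × Bool | ω.2.1 = true} :=
    (measurable_fst.comp measurable_snd) (measurableSet_singleton true)
  have hind : Atil = Set.indicator {ω : Bool × Bool × Bool | ω.2.1 = true}
      (fun _ => (1 : ℝ)) := by
    funext ω
    by_cases h : ω.2.1 = true <;> simp [Atil, h]
  rw [hind, integral_indicator_const (1 : ℝ) hS]
  have hset : {ω : Bool × Bool × Bool | ω.2.1 = true}
      = Set.univ ×ˢ ({true} ×ˢ Set.univ) := by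
    ext ⟨a, b, c⟩; simp
  rw [hset, P3, measureReal_def, Measure.prod_prod, Measure.prod_prod, coin_singleton]
  simp only [measure_univ, one_mul, mul_one, smul_eq_mul]
  rw [ENNReal.toReal_inv]
  norm_num

/-- Explicit counterexample for Proposition 2 (shared reward does not identify
individual contribution): `A` and `B` have the same distribution, yet agent 1's
counterfactual marginal contribution is `A - 1/2 ≠ 0` a.s. under the first
mechanism and identically `0` under the second. -/
theorem shared_reward_does_not_identify_contribution :
    Measure.map A P3 = Measure.map B P3 ∧
    P3[fun ω => A ω - Atil ω | 𝒢] =ᵐ[P3] (fun ω => A ω - 1 / 2) ∧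
    P3 {ω | A ω - 1 / 2 = 0} = 0 ∧
    P3[fun ω => B ω - B ω | 𝒢] = 0 := by
  refine ⟨?_, ?_, ?_, ?_⟩
  · -- same distribution
    have hA : A = (fun b : Bool => if b = true then (1 : ℝ) else 0) ∘ Prod.fst := rfl
    have hB : B = (fun b : Bool => if b = true then (1 : ℝ) else 0)
        ∘ (Prod.snd ∘ Prod.snd) := rfl
    rw [hA, hB, ← Measure.map_map hf_meas measurable_fst,
      ← Measure.map_map hf_meas (measurable_snd.comp measurable_snd),
      ← Measure.map_map measurable_snd measurable_snd, map_fst_P3, map_snd_P3]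
    rw [Measure.map_snd_prod, measure_univ, one_smul]
  · -- conditional expectation
    have intA : Integrable A P3 := .of_finite
    have intAtil : Integrable Atil P3 := .of_finite
    have hA𝒢 : StronglyMeasurable[𝒢] A := by
      have hfst : Measurable[𝒢] (fun ω : Bool × Bool × Bool => ω.1) :=
        measurable_iff_comap_le.mpr le_rfl
      exact (hf_meas.comp hfst).stronglyMeasurable
    have hcA : P3[A | 𝒢] = A := condExp_of_stronglyMeasurable h𝒢le hA𝒢 intA
    have hm1 : MeasurableSpace.comap Atil (inferInstance : MeasurableSpace ℝ)
        ≤ (inferInstance : MeasurableSpace (Bool × Bool × Bool)) :=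
      hAtil_meas.comap_le
    have hAtil_sm : StronglyMeasurable[MeasurableSpace.comap Atil
        (inferInstance : MeasurableSpace ℝ)] Atil :=
      (measurable_iff_comap_le.mpr le_rfl).stronglyMeasurable
    have hcAtil : P3[Atil | 𝒢] =ᵐ[P3] fun _ => ∫ ω, Atil ω ∂P3 :=
      condExp_indep_eq hm1 h𝒢le hAtil_sm indep_Atil_fst
    have hsub : P3[fun ω => A ω - Atil ω | 𝒢] =ᵐ[P3] P3[A | 𝒢] - P3[Atil | 𝒢] :=
      condExp_sub intA intAtil 𝒢
    filter_upwards [hsub, hcAtil] with ω h1 h2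
    rw [h1]
    simp only [Pi.sub_apply, hcA, h2, integral_Atil]
  · -- the set where A - 1/2 = 0 is empty
    have h : {ω : Bool × Bool × Bool | A ω - 1 / 2 = 0} = ∅ := by
      ext ω
      simp only [Set.mem_setOf_eq, Set.mem_empty_iff_false, iff_false, A]
      by_cases h : ω.1 = true <;> simp [h] <;> norm_num
    rw [h, measure_empty]
  · -- trivial counterfactual for the second mechanism
    have h : (fun ω : Bool × Bool × Bool => B ω - B ω) = (0 : (Bool × Bool × Bool) → ℝ) := by
      funext ω; simp
    rw [h, condExp_zero]
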